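/- arXiv:1808.04366 — 3 statements merged into one kernel-verified Lean document; each statement's English description precedes it below -/
import Mathlib

section
/- Let n ≥ 2 and m ≥ 1 be integers. The number ρ(n,m) of Rumer diagrams on n vertices with m edges equals the determinant C(m+n-1, n-1)·C(m+n-2, n-2) − C(m+n-2, n-1)·C(m+n-1, n-2), where C(a,b) denotes the binomial coefficient. -/
/-- Two chords `(i,j)` and `(k,l)` (with `i < j`, `k < l`) of a circle with `n` marked
points cross iff `i < k < j < l` or `k < i < l < j`. -/
def Crosses {n : ℕ} (e f : Fin n × Fin n) : Prop :=
  (e.1 < f.1 ∧ f.1 < e.2 ∧ e.2 < f.2) ∨ (f.1 < e.1 ∧ e.1 < f.2 ∧ f.2 < e.2)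

/-- A Rumer diagram on `n` vertices: a multiset of edges `(i,j)`, `i < j`
(a loopless multigraph on `n` points placed on a circle), no two of which cross. -/
def IsRumer {n : ℕ} (E : Multiset (Fin n × Fin n)) : Prop :=
  (∀ e ∈ E, e.1 < e.2) ∧ ∀ e ∈ E, ∀ f ∈ E, ¬ Crosses e f

open Finset

set_option linter.unnecessarySeqFocus false


def comp (ℓ a : ℕ) : ℕ := (a + ℓ - 1).choose a

lemma comp_zero_right (ℓ : ℕ) : comp ℓ 0 = 1 := by simp [comp]

lemma comp_succ_left (ℓ x : ℕ) : comp (ℓ+1) x = (x+ℓ).choose x := by simp [comp]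

lemma comp_zero_left (a : ℕ) : comp 0 (a+1) = 0 := by
  simp only [comp, Nat.add_zero, Nat.add_sub_cancel]
  exact Nat.choose_eq_zero_of_lt (by omega)

lemma compSum (ℓ a : ℕ) : ∑ t ∈ range (a+1), comp ℓ t = comp (ℓ+1) a := by
  induction a with
  | zero => simp [comp_zero_right]
  | succ a ih =>
      rw [Finset.sum_range_succ, ih, comp_succ_left, comp_succ_left]
      have : comp ℓ (a+1) = (a+ℓ).choose (a+1) := by
        cases ℓ with
        | zero => rw [comp_zero_left]; exact (Nat.choose_eq_zero_of_lt (by omega)).symm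
        | succ l => rw [comp_succ_left]; congr 1 <;> omega
      rw [this]
      have h := Nat.choose_succ_succ' (a+ℓ) a
      have e1 : a + 1 + ℓ = a + ℓ + 1 := by omega
      rw [e1, h]

lemma compSum_reflect (ℓ a : ℕ) : ∑ t ∈ range (a+1), comp ℓ (a - t) = comp (ℓ+1) a := by
  rw [← compSum ℓ a]
  have := Finset.sum_range_reflect (fun t => comp ℓ t) (a+1)
  simp only [Nat.add_sub_cancel] at this
  rw [← this]

lemma sum_comp_trunc (ℓ d b : ℕ) (hd : d < b) :
    ∑ r₀ ∈ range (d+1), comp ℓ (b - r₀) + comp (ℓ+1) (b - d - 1) = comp (ℓ+1) b := by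
  have h1 : ∑ r₀ ∈ range (d+1), comp ℓ (b - r₀) = ∑ t ∈ Ico (b-d) (b+1), comp ℓ t := by
    apply Finset.sum_nbij' (i := fun r₀ => b - r₀) (j := fun t => b - t)
    · intro r hr; simp only [mem_range] at hr; simp only [mem_Ico]; omega
    · intro t ht; simp only [mem_Ico] at ht; simp only [mem_range]; omega
    · intro r hr; simp only [mem_range] at hr; omega
    · intro t ht; simp only [mem_Ico] at ht; omega
    · intro t ht; rfl
  have h2 : ∑ t ∈ range (b-d), comp ℓ t = comp (ℓ+1) (b - d - 1) := by
    have h := compSum ℓ (b-d-1)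
    have e : (b - d - 1) + 1 = b - d := by omega
    rwa [e] at h
  have h3 : ∑ t ∈ Ico 0 (b-d), comp ℓ t + ∑ t ∈ Ico (b-d) (b+1), comp ℓ t
      = ∑ t ∈ Ico 0 (b+1), comp ℓ t := Finset.sum_Ico_consecutive _ (by omega) (by omega)
  rw [← Finset.range_eq_Ico, ← Finset.range_eq_Ico] at h3
  have h4 : ∑ t ∈ range (b+1), comp ℓ t = comp (ℓ+1) b := compSum ℓ b
  rw [h1]
  omega
open Finset

/-- partial sum of first `k` entries -/
def PS {ℓ : ℕ} (x : Fin ℓ → ℕ) (k : ℕ) : ℕ := ∑ i : Fin ℓ, if (i:ℕ) < k then x i else 0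

lemma PS_zero {ℓ : ℕ} (x : Fin ℓ → ℕ) : PS x 0 = 0 := by simp [PS]

lemma PS_cons {ℓ : ℕ} (x₀ : ℕ) (x : Fin ℓ → ℕ) (k : ℕ) :
    PS (Fin.cons x₀ x) (k+1) = x₀ + PS x k := by
  unfold PS
  rw [Fin.sum_univ_succ]
  simp only [Fin.cons_zero, Fin.cons_succ, Fin.val_zero, Fin.val_succ]
  congr 1
  · simp

def Sgen (ℓ c a b : ℕ) : Finset ((Fin ℓ → ℕ) × (Fin ℓ → ℕ)) :=
  (Finset.Nat.antidiagonalTuple ℓ a ×ˢ Finset.Nat.antidiagonalTuple ℓ b).filter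
    (fun p => ∀ k ∈ range ℓ, PS p.2 (k+1) ≤ c + PS p.1 k)

lemma mem_Sgen {ℓ c a b : ℕ} {p : (Fin ℓ → ℕ) × (Fin ℓ → ℕ)} :
    p ∈ Sgen ℓ c a b ↔ (∑ i, p.1 i = a) ∧ (∑ i, p.2 i = b) ∧
      ∀ k ∈ range ℓ, PS p.2 (k+1) ≤ c + PS p.1 k := by
  simp [Sgen, Finset.mem_filter, Finset.mem_product, Finset.Nat.mem_antidiagonalTuple, and_assoc]

lemma cons_mem_Sgen_iff {ℓ c a b s₀ r₀ : ℕ} {s r : Fin ℓ → ℕ} :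
    (Fin.cons s₀ s, Fin.cons r₀ r) ∈ Sgen (ℓ+1) c a b ↔
      s₀ ≤ a ∧ r₀ ≤ c ∧ r₀ ≤ b ∧ (s, r) ∈ Sgen ℓ (c + s₀ - r₀) (a - s₀) (b - r₀) := by
  simp only [mem_Sgen, Fin.sum_cons]
  constructor
  · rintro ⟨hs, hr, hcond⟩
    have h0 : r₀ ≤ c := by
      have := hcond 0 (by simp)
      rw [PS_cons, PS_zero, PS_zero] at this
      omega
    refine ⟨by omega, h0, by omega, by omega, by omega, ?_⟩
    intro k hk
    have := hcond (k+1) (by simp at hk ⊢; omega)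
    rw [PS_cons, PS_cons] at this
    omega
  · rintro ⟨hs₀, hr₀c, hr₀b, hs, hr, hcond⟩
    refine ⟨by omega, by omega, ?_⟩
    intro k hk
    match k with
    | 0 => rw [PS_cons, PS_zero, PS_zero]; omega
    | (k+1) =>
        have := hcond k (by simp at hk ⊢; omega)
        rw [PS_cons, PS_cons]
        omega

lemma PS_one {ℓ : ℕ} (x : Fin (ℓ+1) → ℕ) : PS x 1 = x 0 := by
  have : x = Fin.cons (x 0) (Fin.tail x) := by simp [Fin.cons_self_tail]
  rw [this, PS_cons, PS_zero, Fin.cons_zero]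
  omega

lemma head_le_sum {ℓ : ℕ} (x : Fin (ℓ+1) → ℕ) : x 0 ≤ ∑ i, x i :=
  Finset.single_le_sum (fun i _ => Nat.zero_le (x i)) (Finset.mem_univ 0)

lemma mem_Sgen_head {ℓ c a b : ℕ} {p : (Fin (ℓ+1) → ℕ) × (Fin (ℓ+1) → ℕ)}
    (hp : p ∈ Sgen (ℓ+1) c a b) : p.1 0 ≤ a ∧ p.2 0 ≤ c ∧ p.2 0 ≤ b := by
  rw [mem_Sgen] at hp
  obtain ⟨h1, h2, h3⟩ := hp
  have hc := h3 0 (by simp)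
  rw [PS_zero, PS_one] at hc
  exact ⟨h1 ▸ head_le_sum p.1, by omega, h2 ▸ head_le_sum p.2⟩

lemma card_Sgen_succ (ℓ c a b : ℕ) :
    (Sgen (ℓ+1) c a b).card
      = ∑ q ∈ range (a+1) ×ˢ range (min c b + 1),
          (Sgen ℓ (c + q.1 - q.2) (a - q.1) (b - q.2)).card := by
  rw [Finset.card_eq_sum_card_fiberwise
    (f := fun p => (p.1 0, p.2 0)) (t := range (a+1) ×ˢ range (min c b + 1)) ?_]
  · apply Finset.sum_congr rfl
    intro q hq
    simp only [Finset.mem_product, Finset.mem_range] at hq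
    apply Finset.card_nbij' (fun p => (Fin.tail p.1, Fin.tail p.2))
      (fun p => (Fin.cons q.1 p.1, Fin.cons q.2 p.2))
    · intro p hp
      simp only [Finset.mem_coe, Finset.mem_filter] at hp
      obtain ⟨hp1, hp2⟩ := hp
      have hq1 : p.1 0 = q.1 := congrArg Prod.fst hp2
      have hq2 : p.2 0 = q.2 := congrArg Prod.snd hp2
      have hrepr : (Fin.cons (p.1 0) (Fin.tail p.1), Fin.cons (p.2 0) (Fin.tail p.2)) = p := by
        rw [Prod.ext_iff]
        constructor <;> simp [Fin.cons_self_tail]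
      rw [← hrepr] at hp1
      have := (cons_mem_Sgen_iff.mp hp1).2.2.2
      rwa [hq1, hq2] at this
    · intro p hp
      simp only [Finset.mem_coe, Finset.mem_filter]
      refine ⟨?_, by simp⟩
      rw [cons_mem_Sgen_iff]
      have hm := mem_Sgen.mp hp
      exact ⟨by omega, by omega, by omega, hp⟩
    · intro p hp
      simp only [Finset.mem_coe, Finset.mem_filter] at hp
      rw [Prod.ext_iff]
      have hq1 : p.1 0 = q.1 := congrArg Prod.fst hp.2
      have hq2 : p.2 0 = q.2 := congrArg Prod.snd hp.2
      constructor
      · rw [← hq1]; simp [Fin.cons_self_tail]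
      · rw [← hq2]; simp [Fin.cons_self_tail]
    · intro p hp
      simp [Fin.tail_cons]
  · intro p hp
    have := mem_Sgen_head hp
    simp only [Finset.mem_coe, Finset.mem_product, Finset.mem_range]
    omega

lemma card_Sgen_zero (c a b : ℕ) :
    (Sgen 0 c a b).card = if a = 0 ∧ b = 0 then 1 else 0 := by
  match a, b with
  | 0, 0 =>
      rw [if_pos ⟨rfl, rfl⟩, Finset.card_eq_one]
      refine ⟨(default, default), ?_⟩
      ext p
      simp only [mem_Sgen, Finset.mem_singleton]
      constructor
      · intro _; exact Subsingleton.elim _ _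
      · intro _
        refine ⟨?_, ?_, ?_⟩ <;> simp
  | (a+1), b =>
      rw [if_neg (by omega), Finset.card_eq_zero]
      ext p
      simp [mem_Sgen]
  | 0, (b+1) =>
      rw [if_neg (by omega), Finset.card_eq_zero]
      ext p
      simp [mem_Sgen]

theorem keyCount (ℓ : ℕ) : ∀ c a b : ℕ, b ≤ c + a →
    ((Sgen ℓ c a b).card : ℤ) = comp ℓ a * comp ℓ b
      - (if c < b then (comp ℓ (a+c+1) : ℤ) * comp ℓ (b-c-1) else 0) := by
  induction ℓ with
  | zero =>
      intro c a b _
      rw [card_Sgen_zero]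
      by_cases hab : a = 0 ∧ b = 0
      · obtain ⟨rfl, rfl⟩ := hab
        simp [comp_zero_right]
      · rw [if_neg hab]
        rcases Nat.eq_zero_or_eq_succ_pred b with hb0 | hbs
        · subst hb0
          rw [if_neg (by omega)]
          obtain ⟨a', rfl⟩ : ∃ a', a = a' + 1 := ⟨a - 1, by omega⟩
          simp [comp_zero_left, comp_zero_right]
        · have hbpos : b = (b-1) + 1 := hbs
          rw [hbpos, comp_zero_left]
          by_cases hc : c < (b-1)+1
          · rw [if_pos hc]
            have : a + c + 1 = (a + c) + 1 := rfl
            rw [this, comp_zero_left]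
            simp
          · rw [if_neg hc]; simp
  | succ ℓ ih =>
      intro c a b hb
      have hstep := card_Sgen_succ ℓ c a b
      have hcast : ((Sgen (ℓ+1) c a b).card : ℤ)
          = ∑ s₀ ∈ range (a+1), ∑ r₀ ∈ range (min c b + 1),
              ((Sgen ℓ (c + s₀ - r₀) (a - s₀) (b - r₀)).card : ℤ) := by
        rw [hstep, Finset.sum_product]
        push_cast
        rfl
      rw [hcast]
      have hterm : ∀ s₀ ∈ range (a+1), ∀ r₀ ∈ range (min c b + 1),
          ((Sgen ℓ (c + s₀ - r₀) (a - s₀) (b - r₀)).card : ℤ)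
            = (comp ℓ (a - s₀) : ℤ) * comp ℓ (b - r₀)
              - (if c + s₀ < b then (comp ℓ (b-c-1-s₀) : ℤ) else 0) * comp ℓ (a+c+1-r₀) := by
        intro s₀ hs₀ r₀ hr₀
        simp only [mem_range] at hs₀ hr₀
        rw [ih _ _ _ (by omega)]
        congr 1
        by_cases h : c + s₀ < b
        · rw [if_pos (by omega), if_pos h]
          have e1 : a - s₀ + (c + s₀ - r₀) + 1 = a + c + 1 - r₀ := by omega
          have e2 : b - r₀ - (c + s₀ - r₀) - 1 = b - c - 1 - s₀ := by omega
          rw [e1, e2, mul_comm]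
        · rw [if_neg (by omega), if_neg h, zero_mul]
      rw [Finset.sum_congr rfl (fun s₀ hs₀ => Finset.sum_congr rfl (fun r₀ hr₀ => hterm s₀ hs₀ r₀ hr₀))]
      simp only [Finset.sum_sub_distrib, ← Finset.sum_mul, ← Finset.mul_sum]
      have T1 : ∑ s₀ ∈ range (a+1), (comp ℓ (a - s₀) : ℤ) = comp (ℓ+1) a := by
        rw [← Nat.cast_sum]
        exact_mod_cast compSum_reflect ℓ a
      by_cases hcb : c < b
      · have hmin : min c b = c := by omega
        rw [hmin]
        have T2 : ∑ r₀ ∈ range (c+1), (comp ℓ (b - r₀) : ℤ)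
            = (comp (ℓ+1) b : ℤ) - comp (ℓ+1) (b-c-1) := by
          have := sum_comp_trunc ℓ c b hcb
          have : ((∑ r₀ ∈ range (c+1), comp ℓ (b - r₀)) + comp (ℓ+1) (b-c-1) : ℤ)
              = comp (ℓ+1) b := by exact_mod_cast this
          push_cast at this ⊢
          linarith
        have T4 : ∑ r₀ ∈ range (c+1), (comp ℓ (a+c+1 - r₀) : ℤ)
            = (comp (ℓ+1) (a+c+1) : ℤ) - comp (ℓ+1) a := by
          have h := sum_comp_trunc ℓ c (a+c+1) (by omega)
          have e : a + c + 1 - c - 1 = a := by omega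
          rw [e] at h
          have : ((∑ r₀ ∈ range (c+1), comp ℓ (a+c+1 - r₀)) + comp (ℓ+1) a : ℤ)
              = comp (ℓ+1) (a+c+1) := by exact_mod_cast h
          push_cast at this ⊢
          linarith
        have T3 : ∑ s₀ ∈ range (a+1), (if c + s₀ < b then (comp ℓ (b-c-1-s₀) : ℤ) else 0)
            = (comp (ℓ+1) (b-c-1) : ℤ) := by
          rw [← Finset.sum_filter]
          have hf : (range (a+1)).filter (fun s₀ => c + s₀ < b) = range (b - c) := by
            ext s₀
            simp only [Finset.mem_filter, mem_range]
            omega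
          rw [hf]
          have h := compSum_reflect ℓ (b-c-1)
          have e : (b - c - 1) + 1 = b - c := by omega
          rw [e] at h
          rw [show (∑ s₀ ∈ range (b-c), (comp ℓ (b-c-1-s₀) : ℤ))
              = ((∑ s₀ ∈ range (b-c), comp ℓ (b-c-1-s₀) : ℕ) : ℤ) by push_cast; rfl, h]
        rw [T1, T2, T3, T4, if_pos hcb]
        ring
      · have hmin : min c b = b := by omega
        rw [hmin]
        have T2 : ∑ r₀ ∈ range (b+1), (comp ℓ (b - r₀) : ℤ) = comp (ℓ+1) b := by
          rw [← Nat.cast_sum]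
          exact_mod_cast compSum_reflect ℓ b
        have T3 : ∑ s₀ ∈ range (a+1), (if c + s₀ < b then (comp ℓ (b-c-1-s₀) : ℤ) else 0)
            = 0 := by
          apply Finset.sum_eq_zero
          intro s₀ _
          rw [if_neg (by omega)]
        rw [T1, T2, T3, if_neg hcb]
        ring

variable {n : ℕ}

def sdeg (E : Multiset (Fin n × Fin n)) (i : Fin n) : ℕ := E.countP (fun e => e.1 = i)
def rdeg (E : Multiset (Fin n × Fin n)) (j : Fin n) : ℕ := E.countP (fun e => e.2 = j)

lemma countP_mono' {α : Type*} {p q : α → Prop} [DecidablePred p] [DecidablePred q]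
    {s : Multiset α} (h : ∀ a ∈ s, p a → q a) : s.countP p ≤ s.countP q := by
  induction s using Multiset.induction_on with
  | empty => simp
  | cons x s ih =>
      rw [Multiset.countP_cons, Multiset.countP_cons]
      have hx := h x (Multiset.mem_cons_self x s)
      have hs := ih (fun a ha hp => h a (Multiset.mem_cons_of_mem ha) hp)
      split_ifs with h1 h2 h2 <;> first | omega | exact absurd (hx h1) h2

lemma sum_ite_countP {α : Type*} (E : Multiset α) (g : α → Fin n)
    (P : Fin n → Prop) [DecidablePred P] :
    ∑ i : Fin n, (if P i then E.countP (fun e => g e = i) else 0)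
      = E.countP (fun e => P (g e)) := by
  induction E using Multiset.induction_on with
  | empty => simp
  | cons x E ih =>
      simp only [Multiset.countP_cons]
      have hsum : ∑ i : Fin n,
          (if P i then E.countP (fun e => g e = i) + (if g x = i then 1 else 0) else 0)
          = (∑ i : Fin n, if P i then E.countP (fun e => g e = i) else 0)
            + ∑ i : Fin n, (if g x = i then (if P i then 1 else 0) else 0) := by
        rw [← Finset.sum_add_distrib]
        apply Finset.sum_congr rfl
        intro i _
        split_ifs <;> omega
      rw [hsum, ih, Finset.sum_ite_eq]
      simp

lemma sum_sdeg (E : Multiset (Fin n × Fin n)) : ∑ i, sdeg E i = Multiset.card E := by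
  have := sum_ite_countP E (fun e => e.1) (fun _ => True)
  simpa [sdeg] using this

lemma sum_rdeg (E : Multiset (Fin n × Fin n)) : ∑ i, rdeg E i = Multiset.card E := by
  have := sum_ite_countP E (fun e => e.2) (fun _ => True)
  simpa [rdeg] using this

lemma PS_sdeg (E : Multiset (Fin n × Fin n)) (k : ℕ) :
    PS (sdeg E) k = E.countP (fun e => (e.1:ℕ) < k) :=
  sum_ite_countP E (fun e => e.1) (fun i => (i:ℕ) < k)

lemma PS_rdeg (E : Multiset (Fin n × Fin n)) (k : ℕ) :
    PS (rdeg E) k = E.countP (fun e => (e.2:ℕ) < k) :=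
  sum_ite_countP E (fun e => e.2) (fun i => (i:ℕ) < k)

lemma rumer_ballot {E : Multiset (Fin n × Fin n)} (hE : ∀ e ∈ E, e.1 < e.2) (k : ℕ) :
    PS (rdeg E) (k+1) ≤ PS (sdeg E) k := by
  rw [PS_sdeg, PS_rdeg]
  apply countP_mono'
  intro e he h2
  have := hE e he
  have : (e.1 : ℕ) < (e.2 : ℕ) := this
  omega

lemma canonical_mem {E : Multiset (Fin n × Fin n)} (hR : IsRumer E) (js is : Fin n)
    (hj1 : 0 < rdeg E js) (hj2 : ∀ j, 0 < rdeg E j → js ≤ j)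
    (hi1 : 0 < sdeg E is) (hij : is < js)
    (hi2 : ∀ i, 0 < sdeg E i → i < js → i ≤ is) :
    (is, js) ∈ E := by
  obtain ⟨f, hf, hf2⟩ := Multiset.countP_pos.mp hj1
  obtain ⟨g, hg, hg1⟩ := Multiset.countP_pos.mp hi1
  have hffst : f.1 < js := by rw [← hf2]; exact hR.1 f hf
  have hfle : f.1 ≤ is := hi2 f.1 (Multiset.countP_pos.mpr ⟨f, hf, rfl⟩) hffst
  rcases eq_or_lt_of_le hfle with heq | hlt
  · have : f = (is, js) := Prod.ext heq hf2
    rwa [← this]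
  · have hgj : js ≤ g.2 := hj2 g.2 (Multiset.countP_pos.mpr ⟨g, hg, rfl⟩)
    rcases eq_or_lt_of_le hgj with heq2 | hlt2
    · have : g = (is, js) := Prod.ext hg1 heq2.symm
      rwa [← this]
    · exfalso
      apply hR.2 f hf g hg
      left
      refine ⟨by rw [hg1]; exact hlt, by rw [hg1, hf2]; exact hij, by rw [hf2]; exact hlt2⟩

lemma sdeg_cons (x : Fin n × Fin n) (E : Multiset (Fin n × Fin n)) (i : Fin n) :
    sdeg (x ::ₘ E) i = sdeg E i + (if x.1 = i then 1 else 0) :=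
  Multiset.countP_cons _ _ _

lemma rdeg_cons (x : Fin n × Fin n) (E : Multiset (Fin n × Fin n)) (j : Fin n) :
    rdeg (x ::ₘ E) j = rdeg E j + (if x.2 = j then 1 else 0) :=
  Multiset.countP_cons _ _ _

lemma isRumer_of_le {E F : Multiset (Fin n × Fin n)} (h : E ≤ F) (hF : IsRumer F) :
    IsRumer E :=
  ⟨fun e he => hF.1 e (Multiset.mem_of_le h he),
   fun e he f hf => hF.2 e (Multiset.mem_of_le h he) f (Multiset.mem_of_le h hf)⟩

lemma rumer_eq_of_deg (m : ℕ) : ∀ (E E' : Multiset (Fin n × Fin n)),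
    Multiset.card E = m → IsRumer E → IsRumer E' →
    sdeg E = sdeg E' → rdeg E = rdeg E' → E = E' := by
  induction m with
  | zero =>
      intro E E' hcard _ _ hs _
      have hE : E = 0 := Multiset.card_eq_zero.mp hcard
      have : Multiset.card E' = 0 := by
        rw [← sum_sdeg, ← hs, sum_sdeg, hcard]
      rw [hE, Multiset.card_eq_zero.mp this]
  | succ m ih =>
      intro E E' hcard hR hR' hs hr
      have hpos : 0 < Multiset.card E := by omega
      obtain ⟨e, he⟩ := Multiset.card_pos_iff_exists_mem.mp hpos
      have hFj : (univ.filter (fun j => 0 < rdeg E j)).Nonempty :=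
        ⟨e.2, by
          simp only [Finset.mem_filter, Finset.mem_univ, true_and]
          exact Multiset.countP_pos.mpr ⟨e, he, rfl⟩⟩
      set js := (univ.filter (fun j => 0 < rdeg E j)).min' hFj with hjs
      have hjmem : 0 < rdeg E js := by
        have h := Finset.mem_filter.mp (Finset.min'_mem _ hFj)
        rw [← hjs] at h
        exact h.2
      have hjmin : ∀ j, 0 < rdeg E j → js ≤ j := by
        intro j hj
        exact Finset.min'_le _ _ (by simpa using hj)
      obtain ⟨f, hf, hf2⟩ := Multiset.countP_pos.mp hjmem
      have hFi : (univ.filter (fun i => 0 < sdeg E i ∧ i < js)).Nonempty := by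
        refine ⟨f.1, ?_⟩
        simp only [Finset.mem_filter, Finset.mem_univ, true_and]
        constructor
        · exact Multiset.countP_pos.mpr ⟨f, hf, rfl⟩
        · rw [← hf2]; exact hR.1 f hf
      set is := (univ.filter (fun i => 0 < sdeg E i ∧ i < js)).max' hFi with his
      have himem : 0 < sdeg E is ∧ is < js := by
        have h := Finset.mem_filter.mp (Finset.max'_mem _ hFi)
        rw [← his] at h
        exact h.2
      have himax : ∀ i, 0 < sdeg E i → i < js → i ≤ is := by
        intro i h1 h2
        exact Finset.le_max' _ _ (by simp [h1, h2])
      have hmem : (is, js) ∈ E := canonical_mem hR js is hjmem hjmin himem.1 himem.2 himax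
      have hmem' : (is, js) ∈ E' := by
        apply canonical_mem hR' js is (hr ▸ hjmem) (fun j hj => hjmin j (hr ▸ hj))
          (hs ▸ himem.1) himem.2 (fun i h1 h2 => himax i (hs ▸ h1) h2)
      have hE : E = (is, js) ::ₘ E.erase (is, js) := (Multiset.cons_erase hmem).symm
      have hE' : E' = (is, js) ::ₘ E'.erase (is, js) := (Multiset.cons_erase hmem').symm
      have hsd : sdeg (E.erase (is, js)) = sdeg (E'.erase (is, js)) := by
        funext i
        have h1 : sdeg E i = sdeg (E.erase (is, js)) i + (if is = i then 1 else 0) := by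
          conv_lhs => rw [hE]
          exact sdeg_cons _ _ _
        have h2 : sdeg E' i = sdeg (E'.erase (is, js)) i + (if is = i then 1 else 0) := by
          conv_lhs => rw [hE']
          exact sdeg_cons _ _ _
        have := congrFun hs i
        omega
      have hrd : rdeg (E.erase (is, js)) = rdeg (E'.erase (is, js)) := by
        funext j
        have h1 : rdeg E j = rdeg (E.erase (is, js)) j + (if js = j then 1 else 0) := by
          conv_lhs => rw [hE]
          exact rdeg_cons _ _ _
        have h2 : rdeg E' j = rdeg (E'.erase (is, js)) j + (if js = j then 1 else 0) := by
          conv_lhs => rw [hE']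
          exact rdeg_cons _ _ _
        have := congrFun hr j
        omega
      have hcard1 : Multiset.card (E.erase (is, js)) = m := by
        have := congrArg Multiset.card hE
        rw [Multiset.card_cons] at this
        omega
      have heq := ih (E.erase (is, js)) (E'.erase (is, js)) hcard1
        (isRumer_of_le (Multiset.erase_le _ _) hR)
        (isRumer_of_le (Multiset.erase_le _ _) hR') hsd hrd
      rw [hE, hE', heq]

lemma PS_dec {ℓ : ℕ} (x : Fin ℓ → ℕ) (i0 : Fin ℓ) (h : 0 < x i0) (t : ℕ) :
    PS (fun i => if i = i0 then x i - 1 else x i) t + (if (i0:ℕ) < t then 1 else 0)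
      = PS x t := by
  unfold PS
  have h2 : ∑ i : Fin ℓ, (if i = i0 then (if (i:ℕ) < t then 1 else 0) else 0)
      = (if (i0:ℕ) < t then 1 else 0) := by
    rw [Finset.sum_ite_eq' univ i0 (fun i => if (i:ℕ) < t then 1 else 0)]
    simp
  rw [← h2, ← Finset.sum_add_distrib]
  apply Finset.sum_congr rfl
  intro i _
  dsimp only
  by_cases hi : i = i0
  · subst hi
    split_ifs <;> omega
  · split_ifs <;> omega

lemma sum_dec {ℓ : ℕ} (x : Fin ℓ → ℕ) (i0 : Fin ℓ) (h : 0 < x i0) :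
    (∑ i, (if i = i0 then x i - 1 else x i)) + 1 = ∑ i, x i := by
  have h2 : ∑ i : Fin ℓ, (if i = i0 then 1 else 0) = 1 := by
    rw [Finset.sum_ite_eq' univ i0 (fun _ => 1)]
    simp
  rw [← h2, ← Finset.sum_add_distrib]
  apply Finset.sum_congr rfl
  intro i _
  by_cases hi : i = i0
  · subst hi; split_ifs <;> omega
  · split_ifs <;> omega

lemma exists_rumer_of_ballot (m : ℕ) : ∀ (s r : Fin n → ℕ),
    (∑ i, s i = m) → (∑ i, r i = m) → (∀ k : ℕ, PS r (k+1) ≤ PS s k) →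
    ∃ E : Multiset (Fin n × Fin n),
      Multiset.card E = m ∧ IsRumer E ∧ sdeg E = s ∧ rdeg E = r := by
  induction m with
  | zero =>
      intro s r hs hr _
      refine ⟨0, by simp, ⟨by simp, by simp⟩, ?_, ?_⟩
      · funext i
        have : s i = 0 := by
          by_contra h
          have : 0 < ∑ i, s i := Finset.sum_pos' (fun _ _ => Nat.zero_le _)
            ⟨i, Finset.mem_univ i, by omega⟩
          omega
        simp [sdeg, this]
      · funext j
        have : r j = 0 := by
          by_contra h
          have : 0 < ∑ i, r i := Finset.sum_pos' (fun _ _ => Nat.zero_le _)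
            ⟨j, Finset.mem_univ j, by omega⟩
          omega
        simp [rdeg, this]
  | succ m ih =>
      intro s r hs hr hbal
      have hex : ∃ j, 0 < r j := by
        by_contra h
        push_neg at h
        have : ∑ i, r i = 0 := Finset.sum_eq_zero (fun i _ => by have := h i; omega)
        omega
      have hFj : (univ.filter (fun j => 0 < r j)).Nonempty :=
        ⟨hex.choose, by simp [hex.choose_spec]⟩
      set js := (univ.filter (fun j => 0 < r j)).min' hFj with hjs
      have hjmem : 0 < r js := by
        have h := Finset.mem_filter.mp (Finset.min'_mem _ hFj)
        rw [← hjs] at h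
        exact h.2
      have hjmin : ∀ j, 0 < r j → js ≤ j := fun j hj =>
        Finset.min'_le _ _ (by simp [hj])
      have hrzero : ∀ i : Fin n, (i:ℕ) < (js:ℕ) → r i = 0 := by
        intro i hi
        by_contra h
        have h2 : js ≤ i := hjmin i (by omega)
        have h3 : (js:ℕ) ≤ (i:ℕ) := h2
        omega
      have hPSrzero : ∀ t : ℕ, t ≤ (js:ℕ) → PS r t = 0 := by
        intro t ht
        apply Finset.sum_eq_zero
        intro i _
        by_cases hi : (i:ℕ) < t
        · rw [if_pos hi, hrzero i (by omega)]
        · rw [if_neg hi]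
      have hPSs : 0 < PS s (js:ℕ) := by
        have h1 : r js ≤ PS r ((js:ℕ)+1) := by
          have h0 := Finset.single_le_sum
            (f := fun i : Fin n => if (i:ℕ) < (js:ℕ)+1 then r i else 0)
            (fun i _ => Nat.zero_le _) (Finset.mem_univ js)
          rw [if_pos (Nat.lt_succ_self _)] at h0
          exact h0
        have := hbal (js:ℕ)
        omega
      have hex2 : ∃ i : Fin n, (i:ℕ) < (js:ℕ) ∧ 0 < s i := by
        by_contra h
        push_neg at h
        have : PS s (js:ℕ) = 0 := by
          apply Finset.sum_eq_zero
          intro i _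
          by_cases hi : (i:ℕ) < (js:ℕ)
          · have := h i hi
            rw [if_pos hi]
            omega
          · rw [if_neg hi]
        omega
      have hFi : (univ.filter (fun i => 0 < s i ∧ i < js)).Nonempty := by
        obtain ⟨i, h1, h2⟩ := hex2
        refine ⟨i, ?_⟩
        simp only [Finset.mem_filter, Finset.mem_univ, true_and]
        exact ⟨h2, h1⟩
      set is := (univ.filter (fun i => 0 < s i ∧ i < js)).max' hFi with his
      have himem : 0 < s is ∧ is < js := by
        have h := Finset.mem_filter.mp (Finset.max'_mem _ hFi)
        rw [← his] at h
        exact h.2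
      have himax : ∀ i, 0 < s i → i < js → i ≤ is := fun i h1 h2 =>
        Finset.le_max' _ _ (by simp [h1, h2])
      have hsum_s' : ∑ i, (if i = is then s i - 1 else s i) = m := by
        have := sum_dec s is himem.1
        omega
      have hsum_r' : ∑ j, (if j = js then r j - 1 else r j) = m := by
        have := sum_dec r js hjmem
        omega
      have hbal' : ∀ k : ℕ, PS (fun j => if j = js then r j - 1 else r j) (k+1)
          ≤ PS (fun i => if i = is then s i - 1 else s i) k := by
        intro k
        have h1 := PS_dec r js hjmem (k+1)
        have h2 := PS_dec s is himem.1 k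
        by_cases hk : (js:ℕ) < k+1
        · have hisjs : (is:ℕ) < (js:ℕ) := himem.2
          have hk2 : (is:ℕ) < k := by omega
          have := hbal k
          rw [if_pos hk] at h1
          rw [if_pos hk2] at h2
          omega
        · have h0 : PS r (k+1) = 0 := hPSrzero (k+1) (by omega)
          rw [if_neg hk] at h1
          omega
      obtain ⟨E', hcard', hR', hsd', hrd'⟩ :=
        ih (fun i => if i = is then s i - 1 else s i)
          (fun j => if j = js then r j - 1 else r j) hsum_s' hsum_r' hbal'
      refine ⟨(is, js) ::ₘ E', by simp [hcard'], ?_, ?_, ?_⟩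
      · -- IsRumer
        have hkey : ∀ f ∈ E', js ≤ f.2 ∧ ¬(is < f.1 ∧ f.1 < js) := by
          intro f hf
          have hrf : 0 < (if f.2 = js then r f.2 - 1 else r f.2) := by
            rw [← congrFun hrd' f.2]
            exact Multiset.countP_pos.mpr ⟨f, hf, rfl⟩
          have hsf : 0 < (if f.1 = is then s f.1 - 1 else s f.1) := by
            rw [← congrFun hsd' f.1]
            exact Multiset.countP_pos.mpr ⟨f, hf, rfl⟩
          have hrf2 : 0 < r f.2 := by
            by_cases h : f.2 = js
            · rw [h]; exact hjmem
            · rwa [if_neg h] at hrf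
          have hsf2 : 0 < s f.1 := by
            by_cases h : f.1 = is
            · rw [h]; exact himem.1
            · rwa [if_neg h] at hsf
          refine ⟨hjmin _ hrf2, ?_⟩
          rintro ⟨h1, h2⟩
          have h3 : f.1 ≤ is := himax f.1 hsf2 h2
          have h4 : (f.1:ℕ) ≤ (is:ℕ) := h3
          have h5 : (is:ℕ) < (f.1:ℕ) := h1
          omega
        constructor
        · intro e he
          rcases Multiset.mem_cons.mp he with h | h
          · rw [h]; exact himem.2
          · exact hR'.1 e h
        · intro e he f hf
          rcases Multiset.mem_cons.mp he with h | h <;>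
            rcases Multiset.mem_cons.mp hf with h2 | h2
          · rw [h, h2]
            rintro (⟨c1, c2, c3⟩ | ⟨c1, c2, c3⟩) <;> exact absurd c1 (lt_irrefl _)
          · rw [h]
            obtain ⟨hj, hni⟩ := hkey f h2
            rintro (⟨c1, c2, c3⟩ | ⟨c1, c2, c3⟩)
            · exact hni ⟨c1, c2⟩
            · exact absurd c3 (not_lt.mpr hj)
          · rw [h2]
            obtain ⟨hj, hni⟩ := hkey e h
            rintro (⟨c1, c2, c3⟩ | ⟨c1, c2, c3⟩)
            · exact absurd c3 (not_lt.mpr hj)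
            · exact hni ⟨c1, c2⟩
          · exact hR'.2 e h f h2
      · funext i
        rw [sdeg_cons, congrFun hsd' i]
        by_cases h : i = is
        · rw [if_pos h, if_pos h.symm]
          have h1 : 0 < s i := by rw [h]; exact himem.1
          omega
        · rw [if_neg h, if_neg (fun hh => h hh.symm)]
          omega
      · funext j
        rw [rdeg_cons, congrFun hrd' j]
        by_cases h : j = js
        · rw [if_pos h, if_pos h.symm]
          have h1 : 0 < r j := by rw [h]; exact hjmem
          omega
        · rw [if_neg h, if_neg (fun hh => h hh.symm)]
          omega


lemma PS_of_le {ℓ : ℕ} (x : Fin ℓ → ℕ) {t : ℕ} (h : ℓ ≤ t) : PS x t = ∑ i, x i := by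
  apply Finset.sum_congr rfl
  intro i _
  rw [if_pos (lt_of_lt_of_le i.isLt h)]

theorem card_rumer_eq_det (n m : ℕ) (hn : 2 ≤ n) (hm : 1 ≤ m) :
    (Nat.card {E : Multiset (Fin n × Fin n) // Multiset.card E = m ∧ IsRumer E} : ℤ)
      = ((m + n - 1).choose (n - 1) : ℤ) * ((m + n - 2).choose (n - 2) : ℤ)
        - ((m + n - 2).choose (n - 1) : ℤ) * ((m + n - 1).choose (n - 2) : ℤ) := by
  have hbij : Nat.card {E : Multiset (Fin n × Fin n) // Multiset.card E = m ∧ IsRumer E}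
      = (Sgen n 0 m m).card := by
    rw [← Nat.card_eq_finsetCard]
    apply Nat.card_eq_of_bijective
      (f := fun E => (⟨(sdeg E.1, rdeg E.1), by
        rw [mem_Sgen]
        refine ⟨by rw [sum_sdeg]; exact E.2.1, by rw [sum_rdeg]; exact E.2.1, ?_⟩
        intro k _
        rw [zero_add]
        exact rumer_ballot E.2.2.1 k⟩ : {p // p ∈ Sgen n 0 m m}))
    constructor
    · rintro ⟨E, hE⟩ ⟨E', hE'⟩ h
      simp only [Subtype.mk_eq_mk, Prod.mk.injEq] at h
      exact Subtype.ext (rumer_eq_of_deg m E E' hE.1 hE.2 hE'.2 h.1 h.2)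
    · rintro ⟨p, hp⟩
      rw [mem_Sgen] at hp
      obtain ⟨h1, h2, h3⟩ := hp
      have hbal : ∀ k : ℕ, PS p.2 (k+1) ≤ PS p.1 k := by
        intro k
        by_cases hk : k < n
        · have := h3 k (Finset.mem_range.mpr hk)
          omega
        · rw [PS_of_le p.2 (by omega), PS_of_le p.1 (by omega), h1, h2]
      obtain ⟨E, hc, hR, hsd, hrd⟩ := exists_rumer_of_ballot m p.1 p.2 h1 h2 hbal
      refine ⟨⟨E, hc, hR⟩, ?_⟩
      apply Subtype.ext
      simp only
      rw [hsd, hrd]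
  rw [hbij]
  have hkey := keyCount n 0 m m (by omega)
  rw [if_pos (by omega : 0 < m)] at hkey
  rw [hkey]
  obtain ⟨N, rfl⟩ : ∃ N, n = N + 2 := ⟨n - 2, by omega⟩
  obtain ⟨M, rfl⟩ : ∃ M, m = M + 1 := ⟨m - 1, by omega⟩
  have c1 : comp (N+2) (M+1) = (M+N+2).choose (M+1) := by
    rw [comp_succ_left]; congr 1 <;> omega
  have c2 : comp (N+2) (M+1+0+1) = (M+N+3).choose (M+2) := by
    rw [show M+1+0+1 = M+2 from rfl, comp_succ_left]; congr 1 <;> omega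
  have c3 : comp (N+2) (M+1-0-1) = (M+N+1).choose M := by
    rw [show M+1-0-1 = M from rfl, comp_succ_left]; congr 1 <;> omega
  rw [c1, c2, c3]
  have e1 : M + 1 + (N + 2) - 1 = M+N+2 := by omega
  have e2 : M + 1 + (N + 2) - 2 = M+N+1 := by omega
  have e3 : N + 2 - 1 = N+1 := by omega
  have e4 : N + 2 - 2 = N := by omega
  rw [e1, e2, e3, e4]
  have s1 : (M+N+2).choose (N+1) = (M+N+2).choose (M+1) := by
    rw [← Nat.choose_symm (by omega : M+1 ≤ M+N+2)]
    congr 1; omega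
  have s2 : (M+N+1).choose N = (M+N+1).choose (M+1) := by
    rw [← Nat.choose_symm (by omega : M+1 ≤ M+N+1)]
    congr 1; omega
  have s3 : (M+N+1).choose (N+1) = (M+N+1).choose M := by
    rw [← Nat.choose_symm (by omega : M ≤ M+N+1)]
    congr 1; omega
  have s4 : (M+N+2).choose N = (M+N+2).choose (M+2) := by
    rw [← Nat.choose_symm (by omega : M+2 ≤ M+N+2)]
    congr 1; omega
  rw [s1, s2, s3, s4]
  have p1 : (M+N+3).choose (M+2) = (M+N+2).choose (M+1) + (M+N+2).choose (M+2) := by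
    rw [show M+N+3 = (M+N+2)+1 from rfl]
    exact Nat.choose_succ_succ' (M+N+2) (M+1)
  have p2 : (M+N+2).choose (M+1) = (M+N+1).choose M + (M+N+1).choose (M+1) := by
    rw [show M+N+2 = (M+N+1)+1 from rfl]
    exact Nat.choose_succ_succ' (M+N+1) M
  rw [p1, p2]
  push_cast
  ring
end

section
/- Let n = 2 and let m ≥ 1 be an integer. The dimension of the ℂ-linear space of SL(2,ℂ)-invariant polynomials in ℂ[x₁⁽¹⁾, x₂⁽¹⁾, x₁⁽²⁾, x₂⁽²⁾] that are homogeneous of total degree 2m equals 1. -/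
open MvPolynomial

/-- The action of `σ ∈ SL(2,ℂ)` on polynomials in the `2n` variables
`x₁⁽¹⁾, x₂⁽¹⁾, …, x₁⁽ⁿ⁾, x₂⁽ⁿ⁾`, given by `(σ·f)(x⁽¹⁾,…,x⁽ⁿ⁾) = f(σ⁻¹x⁽¹⁾,…,σ⁻¹x⁽ⁿ⁾)`. -/
noncomputable def sl2Act (n : ℕ) (σ : Matrix.SpecialLinearGroup (Fin 2) ℂ) :
    MvPolynomial (Fin n × Fin 2) ℂ →ₐ[ℂ] MvPolynomial (Fin n × Fin 2) ℂ :=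
  aeval fun p : Fin n × Fin 2 =>
    ∑ b : Fin 2, C (((σ⁻¹ : Matrix.SpecialLinearGroup (Fin 2) ℂ) : Matrix (Fin 2) (Fin 2) ℂ) p.2 b)
      * X (p.1, b)

/-- The submodule of `SL(2,ℂ)`-invariant polynomials. -/
noncomputable def invSubmodule (n : ℕ) : Submodule ℂ (MvPolynomial (Fin n × Fin 2) ℂ) :=
  ⨅ σ : Matrix.SpecialLinearGroup (Fin 2) ℂ,
    LinearMap.eqLocus (sl2Act n σ).toLinearMap LinearMap.id

namespace Sl2Aux

/-- The fundamental invariant: the determinant of the two vectors. -/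
noncomputable def D : MvPolynomial (Fin 2 × Fin 2) ℂ :=
  X (0,0) * X (1,1) - X (0,1) * X (1,0)

lemma D_homog : D.IsHomogeneous 2 :=
  ((isHomogeneous_X _ _).mul (isHomogeneous_X _ _)).sub
    ((isHomogeneous_X _ _).mul (isHomogeneous_X _ _))

lemma D_ne_zero : D ≠ 0 := by
  intro h
  have := congrArg (eval (fun p : Fin 2 × Fin 2 => if p = (0,0) then 1 else if p = (1,1) then 1 else 0)) h
  simp [D] at this

lemma sl2Act_D (σ : Matrix.SpecialLinearGroup (Fin 2) ℂ) : sl2Act 2 σ D = D := by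
  set τ := ((σ⁻¹ : Matrix.SpecialLinearGroup (Fin 2) ℂ) : Matrix (Fin 2) (Fin 2) ℂ) with hτ
  have hdet : τ 0 0 * τ 1 1 - τ 0 1 * τ 1 0 = 1 := by
    have := (σ⁻¹).prop; rwa [Matrix.det_fin_two] at this
  have hC : (C (τ 0 0) * C (τ 1 1) - C (τ 0 1) * C (τ 1 0) : MvPolynomial (Fin 2 × Fin 2) ℂ) = 1 := by
    rw [← map_mul, ← map_mul, ← map_sub, hdet, map_one]
  simp only [sl2Act, D, map_sub, map_mul, aeval_X, Fin.sum_univ_two, ← hτ]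
  linear_combination (X ((0:Fin 2),(0:Fin 2)) * X ((1:Fin 2),(1:Fin 2))
    - X ((0:Fin 2),(1:Fin 2)) * X ((1:Fin 2),(0:Fin 2))) * hC

lemma eval_aeval' (ψ : Fin 2 × Fin 2 → MvPolynomial (Fin 2 × Fin 2) ℂ)
    (f : MvPolynomial (Fin 2 × Fin 2) ℂ) (v : Fin 2 × Fin 2 → ℂ) :
    eval v (aeval ψ f) = eval (fun p => eval v (ψ p)) f := by
  induction f using MvPolynomial.induction_on with
  | C a => simp only [aeval_C, algebraMap_eq, eval_C]
  | add p q hp hq => simp only [map_add, hp, hq]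
  | mul_X p i ih => simp only [map_mul, aeval_X, eval_mul, ih, eval_X]

/-- Pointwise invariance: for every `τ ∈ SL(2,ℂ)`, `f(v) = f(τ·v)`. -/
lemma inv_eval {f : MvPolynomial (Fin 2 × Fin 2) ℂ} (hf : f ∈ invSubmodule 2)
    (τ : Matrix.SpecialLinearGroup (Fin 2) ℂ) (v : Fin 2 × Fin 2 → ℂ) :
    eval v f = eval (fun p => ∑ b : Fin 2,
      (τ : Matrix (Fin 2) (Fin 2) ℂ) p.2 b * v (p.1, b)) f := by
  have h := (Submodule.mem_iInf _).mp hf τ⁻¹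
  have h' : sl2Act 2 τ⁻¹ f = f := h
  conv_lhs => rw [← h']
  rw [sl2Act, eval_aeval']
  have : (fun p : Fin 2 × Fin 2 => eval v (∑ b : Fin 2, C ((τ⁻¹⁻¹ : Matrix.SpecialLinearGroup (Fin 2) ℂ).val p.2 b) * X (p.1, b)))
      = fun p => ∑ b : Fin 2, (τ : Matrix (Fin 2) (Fin 2) ℂ) p.2 b * v (p.1, b) := by
    funext p
    simp [inv_inv]
  rw [this]

noncomputable def φ : Fin 2 × Fin 2 → Polynomial ℂ :=
  fun p => if p = (0,0) then 1 else if p = (1,1) then Polynomial.X else 0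

lemma eval_polyaeval (g : Polynomial ℂ) (v : Fin 2 × Fin 2 → ℂ) :
    eval v (Polynomial.aeval D g) = Polynomial.eval (eval v D) g := by
  induction g using Polynomial.induction_on with
  | C a => simp
  | add p q hp hq => simp only [map_add, hp, hq, Polynomial.eval_add]
  | monomial k a ih => simp only [map_mul, Polynomial.aeval_C, Polynomial.aeval_X, map_pow,
      eval_mul, eval_pow, ih, Polynomial.eval_mul, Polynomial.eval_C, Polynomial.eval_pow,
      Polynomial.eval_X, algHom_C, algebraMap_eq, eval_C] at *

lemma polyeval_aeval (f : MvPolynomial (Fin 2 × Fin 2) ℂ) (d : ℂ) :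
    Polynomial.eval d (aeval φ f) = eval (fun p => Polynomial.eval d (φ p)) f := by
  induction f using MvPolynomial.induction_on with
  | C a => simp
  | add p q hp hq => simp only [map_add, hp, hq, Polynomial.eval_add]
  | mul_X p i ih => simp only [map_mul, aeval_X, Polynomial.eval_mul, ih, eval_mul, eval_X]

lemma key {f : MvPolynomial (Fin 2 × Fin 2) ℂ} (hf : f ∈ invSubmodule 2) :
    (f - Polynomial.aeval D (aeval φ f)) * D = 0 := by
  apply MvPolynomial.funext
  intro v
  simp only [map_mul, map_sub, map_zero]
  by_cases hd : eval v D = 0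
  · rw [hd]; ring
  · suffices h : eval v f = eval v (Polynomial.aeval D (aeval φ f)) by rw [h]; ring
    rw [eval_polyaeval, polyeval_aeval]
    set x0 := v (0,0) with hx0; set x1 := v (0,1) with hx1
    set y0 := v (1,0) with hy0; set y1 := v (1,1) with hy1
    have hD : eval v D = x0 * y1 - x1 * y0 := by
      simp only [D, map_sub, map_mul, eval_X]; rfl
    set d := eval v D with hdd
    have hdet : Matrix.det !![y1/d, -(y0/d); -x1, x0] = 1 := by
      rw [Matrix.det_fin_two_of]
      field_simp
      rw [hD]; ring
    set τ : Matrix.SpecialLinearGroup (Fin 2) ℂ := ⟨_, hdet⟩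
    rw [inv_eval hf τ v]
    have hw : (fun p : Fin 2 × Fin 2 => ∑ b : Fin 2,
        (τ : Matrix (Fin 2) (Fin 2) ℂ) p.2 b * v (p.1, b))
        = fun p => Polynomial.eval d (φ p) := by
      funext p
      have hp2 : (τ : Matrix (Fin 2) (Fin 2) ℂ) = !![y1/d, -(y0/d); -x1, x0] := rfl
      rcases p with ⟨i, a⟩
      fin_cases i <;> fin_cases a <;>
        simp only [Fin.sum_univ_two, hp2, Matrix.cons_val', Matrix.cons_val_zero,
          Matrix.cons_val_one, Matrix.head_cons, Matrix.head_fin_const, Matrix.of_apply, φ,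
          Fin.isValue] <;> norm_num [Fin.ext_iff] <;>
        simp only [show (0 : Fin 2 × Fin 2) = ((0 : Fin 2), (0 : Fin 2)) from rfl,
          show (1 : Fin 2 × Fin 2) = ((1 : Fin 2), (1 : Fin 2)) from rfl,
          ← hx0, ← hx1, ← hy0, ← hy1]
      · field_simp; rw [hD]; ring
      · ring
      · ring
      · rw [hD]; ring
    rw [hw]

lemma mem_span {m : ℕ} {f : MvPolynomial (Fin 2 × Fin 2) ℂ}
    (hh : f ∈ homogeneousSubmodule (Fin 2 × Fin 2) ℂ (2 * m))
    (hf : f ∈ invSubmodule 2) : f ∈ Submodule.span ℂ {D ^ m} := by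
  have h0 : f - Polynomial.aeval D (aeval φ f) = 0 := by
    rcases mul_eq_zero.mp (key hf) with h | h
    · exact h
    · exact absurd h D_ne_zero
  have hfH : f = Polynomial.aeval D (aeval φ f) := sub_eq_zero.mp h0
  set g := aeval φ f with hg
  set N := g.natDegree + 1 with hN
  have hsum : f = ∑ i ∈ Finset.range N, g.coeff i • D ^ i := by
    rw [hfH, Polynomial.aeval_eq_sum_range]
  have hfc : f = homogeneousComponent (2 * m) f := by
    rw [homogeneousComponent_of_mem hh, if_pos rfl]
  have hstep : homogeneousComponent (2 * m) f
      = ∑ i ∈ Finset.range N, if i = m then g.coeff i • D ^ i else 0 := by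
    conv_lhs => rw [hsum]
    rw [map_sum]
    refine Finset.sum_congr rfl fun i _ => ?_
    rw [LinearMap.map_smul, homogeneousComponent_of_mem
      ((mem_homogeneousSubmodule _ _).mpr (D_homog.pow i))]
    by_cases him : i = m
    · subst him; rw [if_pos rfl, if_pos rfl]
    · rw [if_neg (by omega), if_neg him, smul_zero]
  rw [hfc, hstep, Finset.sum_ite_eq' (Finset.range N) m (fun i => g.coeff i • D ^ i)]
  by_cases hmN : m ∈ Finset.range N
  · rw [if_pos hmN]
    exact Submodule.smul_mem _ _ (Submodule.mem_span_singleton_self _)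
  · rw [if_neg hmN]
    exact Submodule.zero_mem _

lemma Dpow_mem (m : ℕ) :
    D ^ m ∈ homogeneousSubmodule (Fin 2 × Fin 2) ℂ (2 * m) ⊓ invSubmodule 2 := by
  constructor
  · exact (mem_homogeneousSubmodule _ _).mpr (D_homog.pow m)
  · refine (Submodule.mem_iInf _).mpr fun σ => ?_
    show sl2Act 2 σ (D ^ m) = D ^ m
    rw [map_pow, sl2Act_D]

end Sl2Aux

theorem dim_invariants_two_atoms (m : ℕ) (hm : 1 ≤ m) :
    Module.finrank ℂ
        ↥(homogeneousSubmodule (Fin 2 × Fin 2) ℂ (2 * m) ⊓ invSubmodule 2) = 1 := by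
  have heq : homogeneousSubmodule (Fin 2 × Fin 2) ℂ (2 * m) ⊓ invSubmodule 2
      = Submodule.span ℂ {Sl2Aux.D ^ m} := by
    refine le_antisymm ?_ ?_
    · rintro f ⟨h1, h2⟩
      exact Sl2Aux.mem_span h1 h2
    · rw [Submodule.span_le, Set.singleton_subset_iff]
      exact Sl2Aux.Dpow_mem m
  rw [heq]
  exact finrank_span_singleton (pow_ne_zero m Sl2Aux.D_ne_zero)
end

section
/- Let n ≥ 3 and m ≥ 1 be integers. Then C(m+n-1, n-1)·C(m+n-2, n-2) − C(m+n-2, n-1)·C(m+n-1, n-2) = (1/((n-1)!·(n-2)!)) · (m+1) · (m+n-1) · ∏_{ι=2}^{n-2} (m+ι)², where C(a,b) denotes the binomial coefficient. -/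
open Finset

lemma prod_fact_aux (m k : ℕ) :
    (∏ i ∈ Finset.Icc 1 k, (m + i)) * m.factorial = (m + k).factorial := by
  induction k with
  | zero => simp
  | succ k ih =>
      rw [Finset.prod_Icc_succ_top (by omega : 1 ≤ k + 1)]
      rw [show m + (k+1) = (m+k)+1 from rfl, Nat.factorial_succ]
      rw [mul_right_comm, ih]; ring

lemma choose_eq_prod (m k : ℕ) :
    ((m + k).choose k : ℚ) = (∏ i ∈ Finset.range k, ((m : ℚ) + 1 + i)) / k.factorial := by
  have h1 : (m + k).choose k * m.factorial * k.factorial = (m + k).factorial :=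
    Nat.add_choose_mul_factorial_mul_factorial m k
  have h2 := prod_fact_aux m k
  have h3 : (m + k).choose k * k.factorial = ∏ i ∈ Finset.Icc 1 k, (m + i) := by
    have h1' : (m + k).choose k * k.factorial * m.factorial = (m + k).factorial := by
      rw [← h1]; ring
    have := h1'.trans h2.symm
    exact Nat.eq_of_mul_eq_mul_right (Nat.factorial_pos m) this
  have h4 : ((m + k).choose k : ℚ) * k.factorial = ∏ i ∈ Finset.Icc 1 k, ((m : ℚ) + i) := by
    have := congrArg (fun x : ℕ => (x : ℚ)) h3
    push_cast at this
    exact this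
  have h5 : ∏ i ∈ Finset.Icc 1 k, ((m : ℚ) + i) = ∏ i ∈ Finset.range k, ((m : ℚ) + 1 + i) := by
    rw [← Finset.Ico_add_one_right_eq_Icc, Finset.prod_Ico_eq_prod_range]
    simp only [show k + 1 - 1 = k by omega]
    apply Finset.prod_congr rfl
    intro i _
    push_cast; ring
  rw [h5] at h4
  have fk : (k.factorial : ℚ) ≠ 0 := Nat.cast_ne_zero.mpr (Nat.factorial_ne_zero _)
  field_simp
  linarith [h4]

lemma P_succ (x : ℚ) (k : ℕ) :
    ∏ i ∈ Finset.range (k+1), (x + i) = (∏ i ∈ Finset.range k, (x + i)) * (x + k) := by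
  rw [Finset.prod_range_succ]

lemma P_shift (x : ℚ) (k : ℕ) :
    ∏ i ∈ Finset.range (k+1), (x + i) = x * ∏ i ∈ Finset.range k, (x + 1 + i) := by
  rw [Finset.prod_range_succ']
  push_cast
  rw [add_zero, mul_comm]
  congr 1
  apply Finset.prod_congr rfl
  intro i _; ring

theorem det_binomials_eq_polynomial (n m : ℕ) (hn : 3 ≤ n) (hm : 1 ≤ m) :
    ((m + n - 1).choose (n - 1) : ℚ) * ((m + n - 2).choose (n - 2) : ℚ)
        - ((m + n - 2).choose (n - 1) : ℚ) * ((m + n - 1).choose (n - 2) : ℚ)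
      = (1 / ((Nat.factorial (n - 1) : ℚ) * (Nat.factorial (n - 2) : ℚ)))
          * (m + 1) * (m + n - 1) * ∏ ι ∈ Finset.Icc 2 (n - 2), ((m : ℚ) + ι) ^ 2 := by
  obtain ⟨c, rfl⟩ : ∃ c, n = c + 3 := ⟨n - 3, by omega⟩
  obtain ⟨b, rfl⟩ : ∃ b, m = b + 1 := ⟨m - 1, by omega⟩
  have e3 : c + 3 - 1 = c + 2 := by omega
  have e4 : c + 3 - 2 = c + 1 := by omega
  rw [show ((b+1) + (c+3) - 1).choose (c + 3 - 1) = ((b+1) + (c+2)).choose (c+2) by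
        rw [show (b+1) + (c+3) - 1 = (b+1) + (c+2) by omega, e3],
      show ((b+1) + (c+3) - 2).choose (c + 3 - 2) = ((b+1) + (c+1)).choose (c+1) by
        rw [show (b+1) + (c+3) - 2 = (b+1) + (c+1) by omega, e4],
      show ((b+1) + (c+3) - 2).choose (c + 3 - 1) = (b + (c+2)).choose (c+2) by
        rw [show (b+1) + (c+3) - 2 = b + (c+2) by omega, e3],
      show ((b+1) + (c+3) - 1).choose (c + 3 - 2) = ((b+2) + (c+1)).choose (c+1) by
        rw [show (b+1) + (c+3) - 1 = (b+2) + (c+1) by omega, e4],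
      e3, e4, choose_eq_prod, choose_eq_prod, choose_eq_prod, choose_eq_prod]
  push_cast
  have q1 : ∏ ι ∈ Finset.Icc 2 (c+1), ((b : ℚ) + 1 + ι) ^ 2
      = (∏ i ∈ Finset.range c, ((b : ℚ) + 3 + i)) ^ 2 := by
    rw [Finset.prod_pow, ← Finset.Ico_add_one_right_eq_Icc, Finset.prod_Ico_eq_prod_range]
    simp only [show c + 1 + 1 - 2 = c by omega]
    congr 1
    apply Finset.prod_congr rfl
    intro i _; push_cast; ring
  rw [q1]
  have hQ1 : ∏ i ∈ Finset.range (c+2), ((b : ℚ) + 1 + 1 + i)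
      = ((b : ℚ) + 2) * (∏ i ∈ Finset.range c, ((b : ℚ) + 3 + i)) * ((b : ℚ) + 3 + c) := by
    rw [show (b : ℚ) + 1 + 1 = (b : ℚ) + 2 by ring, P_shift,
        show (b : ℚ) + 2 + 1 = (b : ℚ) + 3 by ring, P_succ]
    ring
  have hQ2 : ∏ i ∈ Finset.range (c+1), ((b : ℚ) + 1 + 1 + i)
      = ((b : ℚ) + 2) * ∏ i ∈ Finset.range c, ((b : ℚ) + 3 + i) := by
    rw [show (b : ℚ) + 1 + 1 = (b : ℚ) + 2 by ring, P_shift,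
        show (b : ℚ) + 2 + 1 = (b : ℚ) + 3 by ring]
  have hQ3 : ∏ i ∈ Finset.range (c+2), ((b : ℚ) + 1 + i)
      = ((b : ℚ) + 1) * ((b : ℚ) + 2) * ∏ i ∈ Finset.range c, ((b : ℚ) + 3 + i) := by
    rw [show (c+2) = (c+1)+1 from rfl, P_shift ((b : ℚ)+1) (c+1),
        show (b : ℚ) + 1 + 1 = (b : ℚ) + 2 by ring, P_shift ((b : ℚ)+2) c,
        show (b : ℚ) + 2 + 1 = (b : ℚ) + 3 by ring]
    ring
  have hQ4 : ∏ i ∈ Finset.range (c+1), ((b : ℚ) + 2 + 1 + i)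
      = (∏ i ∈ Finset.range c, ((b : ℚ) + 3 + i)) * ((b : ℚ) + 3 + c) := by
    rw [show (b : ℚ) + 2 + 1 = (b : ℚ) + 3 by ring, P_succ]
  rw [hQ1, hQ2, hQ3, hQ4]
  have f1 : (((c+2).factorial : ℚ)) ≠ 0 := Nat.cast_ne_zero.mpr (Nat.factorial_ne_zero _)
  have f2 : (((c+1).factorial : ℚ)) ≠ 0 := Nat.cast_ne_zero.mpr (Nat.factorial_ne_zero _)
  field_simp
  ring
end
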